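/- Under the Poisson bracket {G_{bj}, G_{cℓ}} = G_{bℓ}G_{cj}/(λ_j - λ_ℓ) (j≠ℓ), {G_{bk}, λ_ℓ} = -G_{bk}δ_{ℓk}, one has {G_{jk}, det G} = 0 for all j,k, and {log det G, tr L} = -n, i.e. {det G, Σ_i λ_i} = -n · det G. -/

import Mathlib

open Matrix

/-- Derivation applied to a finite product. -/
private lemma deriv_prod {R : Type*} [CommRing R] {ι : Type*} [DecidableEq ι]
    (D : R →+ R) (hleib : ∀ b c, D (b * c) = D b * c + b * D c) :
    ∀ (s : Finset ι) (f : ι → R),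
      D (∏ i ∈ s, f i) = ∑ i ∈ s, D (f i) * ∏ j ∈ s.erase i, f j := by
  intro s f
  induction s using Finset.induction_on with
  | empty =>
      have h1 : D 1 = 0 := by
        have := hleib 1 1
        simp at this
        linear_combination this
      simp [h1]
  | insert a s ha ih =>
      rw [Finset.prod_insert ha, hleib, ih, Finset.sum_insert ha,
        Finset.erase_insert ha, Finset.mul_sum]
      congr 1
      refine Finset.sum_congr rfl fun i hi => ?_
      have hia : i ≠ a := fun h => ha (h ▸ hi)
      rw [Finset.erase_insert_of_ne hia.symm,
        Finset.prod_insert (fun h => ha (Finset.mem_of_mem_erase h))]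
      ring

/-- A derivation applied to a determinant expands column by column. -/
private lemma deriv_det {R : Type*} [CommRing R] {n : ℕ}
    (D : R →+ R) (hleib : ∀ b c, D (b * c) = D b * c + b * D c)
    (M : Matrix (Fin n) (Fin n) R) :
    D M.det = ∑ ℓ : Fin n, (M.updateCol ℓ (fun r => D (M r ℓ))).det := by
  have key : ∀ ℓ : Fin n, (M.updateCol ℓ (fun r => D (M r ℓ))).det =
      ∑ σ : Equiv.Perm (Fin n), ((Equiv.Perm.sign σ : ℤ) : R) *
        (D (M (σ ℓ) ℓ) * ∏ i ∈ Finset.univ.erase ℓ, M (σ i) i) := by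
    intro ℓ
    rw [det_apply']
    refine Finset.sum_congr rfl fun σ _ => ?_
    congr 1
    rw [← Finset.mul_prod_erase Finset.univ _ (Finset.mem_univ ℓ)]
    congr 1
    · simp [updateCol_apply]
    · refine Finset.prod_congr rfl fun i hi => ?_
      rw [updateCol_apply, if_neg (Finset.ne_of_mem_erase hi)]
  rw [det_apply', map_sum]
  have h1 : ∀ σ : Equiv.Perm (Fin n),
      D (((Equiv.Perm.sign σ : ℤ) : R) * ∏ i, M (σ i) i) =
      ∑ ℓ : Fin n, ((Equiv.Perm.sign σ : ℤ) : R) *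
        (D (M (σ ℓ) ℓ) * ∏ i ∈ Finset.univ.erase ℓ, M (σ i) i) := by
    intro σ
    rw [← zsmul_eq_mul, map_zsmul, deriv_prod D hleib, zsmul_eq_mul,
      Finset.mul_sum]
  simp only [h1, key]
  exact Finset.sum_comm

theorem bracket_detG_trL
    {R : Type*} [CommRing R] (n : ℕ)
    (P : R → R → R)
    -- `P` is an antisymmetric biderivation:
    (hskew : ∀ a b, P a b = -P b a)
    (hadd : ∀ a b c, P a (b + c) = P a b + P a c)
    (hleib : ∀ a b c, P a (b * c) = P a b * c + b * P a c)
    (G : Matrix (Fin n) (Fin n) R) (lam : Fin n → R)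
    (hunit : ∀ j ℓ : Fin n, j ≠ ℓ → IsUnit (lam j - lam ℓ))
    (hGG : ∀ (b c j ℓ : Fin n), j ≠ ℓ →
      (lam j - lam ℓ) * P (G b j) (G c ℓ) = G b ℓ * G c j)
    (hGGdiag : ∀ (b c j : Fin n), P (G b j) (G c j) = 0)
    (hGlam : ∀ (b k ℓ : Fin n), P (G b k) (lam ℓ) = -(if ℓ = k then G b k else 0)) :
    (∀ j k : Fin n, P (G j k) G.det = 0) ∧
    P G.det (∑ i : Fin n, lam i) = -(n : R) * G.det := by
  -- a determinant with a zero column vanishes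
  have hzero : ∀ (M : Matrix (Fin n) (Fin n) R) (ℓ : Fin n),
      (M.updateCol ℓ (fun _ => (0 : R))).det = 0 := by
    intro M ℓ
    have : (fun _ : Fin n => (0 : R)) = (0 : R) • (fun r => M r ℓ) := by
      funext r; simp
    rw [this, det_updateCol_smul, zero_mul]
  constructor
  · intro j k
    set D : R →+ R := AddMonoidHom.mk' (P (G j k)) (hadd (G j k)) with hD
    have hDleib : ∀ b c, D (b * c) = D b * c + b * D c := fun b c => hleib _ b c
    have : D G.det = 0 := by
      rw [deriv_det D hDleib]
      refine Finset.sum_eq_zero fun ℓ _ => ?_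
      by_cases hk : ℓ = k
      · subst hk
        have hcol : (fun r => D (G r ℓ)) = fun _ : Fin n => (0 : R) := by
          funext r; exact hGGdiag j r ℓ
        rw [hcol, hzero]
      · -- ℓ ≠ k : the column is a multiple of column k
        have hne : k ≠ ℓ := fun h => hk h.symm
        obtain ⟨u, hu⟩ := hunit k ℓ hne
        have hcol : (fun r => D (G r ℓ)) =
            (((u⁻¹ : Rˣ) : R) * G j ℓ) • (fun r => G r k) := by
          funext r
          have h2 : (lam k - lam ℓ) * P (G j k) (G r ℓ) = G j ℓ * G r k :=
            hGG j r k ℓ hne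
          rw [← hu] at h2
          have := congrArg (fun x => ((u⁻¹ : Rˣ) : R) * x) h2
          simp only [← mul_assoc, Units.inv_mul, one_mul] at this
          simpa [mul_assoc, hD] using this
        rw [hcol, det_updateCol_smul,
          det_updateCol_eq_zero hne, mul_zero]
    exact this
  · -- second part
    have hPsum : ∀ a, P a (∑ i : Fin n, lam i) = ∑ i : Fin n, P a (lam i) := by
      intro a
      exact map_sum (AddMonoidHom.mk' (P a) (hadd a)) lam Finset.univ
    rw [hPsum]
    have hterm : ∀ i : Fin n, P G.det (lam i) = -G.det := by
      intro i
      rw [hskew]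
      set D : R →+ R := AddMonoidHom.mk' (P (lam i)) (hadd (lam i)) with hD
      have hDleib : ∀ b c, D (b * c) = D b * c + b * D c := fun b c => hleib _ b c
      have hval : P (lam i) G.det = G.det := by
        show D G.det = G.det
        rw [deriv_det D hDleib]
        rw [Finset.sum_eq_single i]
        · have hcol : (fun r => D (G r i)) = fun r => G r i := by
            funext r
            show P (lam i) (G r i) = G r i
            rw [hskew, hGlam r i i, if_pos rfl, neg_neg]
          rw [hcol, updateCol_eq_self]
        · intro ℓ _ hℓ
          have hcol : (fun r => D (G r ℓ)) = fun _ : Fin n => (0 : R) := by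
            funext r
            show P (lam i) (G r ℓ) = 0
            rw [hskew, hGlam r ℓ i, if_neg (fun h => hℓ h.symm), neg_zero, neg_zero]
          rw [hcol, hzero]
        · intro h; exact absurd (Finset.mem_univ i) h
      rw [hval]
    simp only [hterm]
    rw [Finset.sum_const, Finset.card_univ, Fintype.card_fin]
    simp [mul_comm]
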